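/- arXiv:1711.06760 — 2 statements merged into one kernel-verified Lean document; each statement's English description precedes it below -/
import Mathlib

section
/- Complement of attractor is a trap: with W as the limit attractor set for player 2 from the previous construction (targets W⁰, reachability game on finite digraph G with V = V₁ ∪ V₂), player 1 has a positional strategy such that from any starting vertex v ∈ V \ W with at least one outgoing edge from every non-terminal vertex, the play never enters W; in particular the play never reaches W⁰. -/
/-- The player-2 attractor levels of the target set `W0`: `attr (k+1)` adds the
`V₂`-vertices with some edge into `attr k` and the `V₁`-vertices having an outgoing
edge all of whose outgoing edges enter `attr k`. -/
def attr {V : Type*} (E : V → V → Prop) (V₁ V₂ : Set V) (W0 : Set V) : ℕ → Set V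
  | 0 => W0
  | k + 1 =>
      attr E V₁ V₂ W0 k ∪
        {v | v ∈ V₂ ∧ ∃ w, E v w ∧ w ∈ attr E V₁ V₂ W0 k} ∪
        {v | v ∈ V₁ ∧ (∃ w, E v w) ∧ ∀ w, E v w → w ∈ attr E V₁ V₂ W0 k}

lemma attr_mono {V : Type*} (E : V → V → Prop) (V₁ V₂ : Set V) (W0 : Set V) :
    Monotone (attr E V₁ V₂ W0) := by
  apply monotone_nat_of_le_succ
  intro k
  intro v hv
  exact Or.inl (Or.inl hv)

/-- The complement of the player-2 attractor `W` is a trap for player 1: assuming every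
vertex outside `W` has an outgoing edge, every `V₁`-vertex outside `W` has an outgoing
edge staying outside `W`, every edge from a `V₂`-vertex outside `W` stays outside `W`,
and player 1 has a positional strategy keeping every play starting outside `W` outside
`W` forever (in particular, the play never reaches `W0`). -/
theorem attractor_complement_trap {V : Type*} [Fintype V] (E : V → V → Prop)
    (V₁ V₂ : Set V) (hcov : V₁ ∪ V₂ = Set.univ) (hdisj : Disjoint V₁ V₂)
    (W0 : Set V) (W : Set V) (hW : W = ⋃ k, attr E V₁ V₂ W0 k)
    (hout : ∀ v ∉ W, ∃ w, E v w) :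
    (∀ v ∈ V₁, v ∉ W → ∃ w, E v w ∧ w ∉ W) ∧
    (∀ v ∈ V₂, v ∉ W → ∀ w, E v w → w ∉ W) ∧
    ∃ σ₁ : V → V, (∀ v ∈ V₁, v ∉ W → E v (σ₁ v) ∧ σ₁ v ∉ W) ∧
      ∀ f : ℕ → V, f 0 ∉ W →
        (∀ n, E (f n) (f (n + 1)) ∧ (f n ∈ V₁ → f (n + 1) = σ₁ (f n))) →
        ∀ n, f n ∉ W := by
  classical
  have h1 : ∀ v ∈ V₁, v ∉ W → ∃ w, E v w ∧ w ∉ W := by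
    intro v hv1 hvW
    by_contra hc
    push_neg at hc
    apply hvW
    -- every successor is in W; find uniform level N
    have hS : (Set.univ : Set V).Finite := Set.finite_univ
    -- choose level for each vertex of W
    have hlev : ∀ w : V, w ∈ W → ∃ k, w ∈ attr E V₁ V₂ W0 k := by
      intro w hw
      rw [hW] at hw
      exact Set.mem_iUnion.mp hw
    set g : V → ℕ := fun w => if h : w ∈ W then Nat.find (hlev w h) else 0 with hg
    set N : ℕ := Finset.univ.sup g with hN
    have hall : ∀ w, E v w → w ∈ attr E V₁ V₂ W0 N := by
      intro w hew
      have hwW : w ∈ W := hc w hew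
      have : w ∈ attr E V₁ V₂ W0 (g w) := by
        simp only [hg, dif_pos hwW]
        exact Nat.find_spec (hlev w hwW)
      exact attr_mono E V₁ V₂ W0 (Finset.le_sup (Finset.mem_univ w)) this
    have hvN : v ∈ attr E V₁ V₂ W0 (N + 1) :=
      Or.inr ⟨hv1, hout v hvW, hall⟩
    rw [hW]
    exact Set.mem_iUnion.mpr ⟨N + 1, hvN⟩
  have h2 : ∀ v ∈ V₂, v ∉ W → ∀ w, E v w → w ∉ W := by
    intro v hv2 hvW w hew hwW
    apply hvW
    rw [hW] at hwW ⊢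
    obtain ⟨k, hk⟩ := Set.mem_iUnion.mp hwW
    exact Set.mem_iUnion.mpr ⟨k + 1, Or.inl (Or.inr ⟨hv2, w, hew, hk⟩)⟩
  refine ⟨h1, h2, ?_⟩
  set σ₁ : V → V := fun v =>
    if h : v ∈ V₁ ∧ v ∉ W then Classical.choose (h1 v h.1 h.2) else v with hσ
  have hσgood : ∀ v ∈ V₁, v ∉ W → E v (σ₁ v) ∧ σ₁ v ∉ W := by
    intro v hv1 hvW
    have h : v ∈ V₁ ∧ v ∉ W := ⟨hv1, hvW⟩
    simp only [hσ, dif_pos h]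
    exact Classical.choose_spec (h1 v hv1 hvW)
  refine ⟨σ₁, hσgood, ?_⟩
  intro f h0 hstep n
  induction n with
  | zero => exact h0
  | succ n ih =>
    obtain ⟨he, hc⟩ := hstep n
    rcases (Set.eq_univ_iff_forall.mp hcov (f n)) with h1' | h2'
    · rw [hc h1']
      exact (hσgood (f n) h1' ih).2
    · exact h2 (f n) h2' ih _ he
end

section
/- Every two-person win/lose DG game has a saddle point in pure positional strategies: let G = (V,E) be a finite digraph, V = V₁ ∪ V₂ ∪ V_T with V_T the terminals (no outgoing edges except self-loops), every non-terminal vertex has an outgoing edge, and let the outcomes be the terminals together with one outcome c for all infinite (non-terminating) plays; fix a partition of outcomes into A₁ (player 1 wins) and A₂ (player 2 wins). Then for every initial position v₀ there exist positional strategies (x₁, x₂) forming a saddle point: exactly one player has a positional strategy winning against all strategies of the opponent. -/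
section DGAttractor

variable {V : Type*} (E : V → V → Prop) (S T : Set V)

/-- One step of the attractor construction for the player owning `S` toward target `T`. -/
def dgStep (A : Set V) : Set V :=
  A ∪ {v | (v ∈ S ∧ ∃ w, E v w ∧ w ∈ A) ∨ (v ∉ S ∧ ∀ w, E v w → w ∈ A)}

/-- Iterated attractor. -/
def dgIter : ℕ → Set V
  | 0 => T
  | n + 1 => dgStep E S (dgIter n)

/-- The attractor. -/
def dgAttr : Set V := ⋃ n, dgIter E S T n

lemma dgIter_mono : Monotone (dgIter E S T) :=
  monotone_nat_of_le_succ fun _ => Set.subset_union_left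

lemma dgIter_subset_attr (n : ℕ) : dgIter E S T n ⊆ dgAttr E S T :=
  Set.subset_iUnion _ n

lemma dgT_subset_attr : T ⊆ dgAttr E S T := dgIter_subset_attr E S T 0

variable {E S T}

lemma dg_escape_mem {v : V} (hv : v ∉ dgAttr E S T) (hS : v ∈ S) :
    ∀ w, E v w → w ∉ dgAttr E S T := by
  intro w hw hwA
  obtain ⟨n, hn⟩ := Set.mem_iUnion.mp hwA
  exact hv (dgIter_subset_attr E S T (n + 1)
    (Or.inr (Or.inl ⟨hS, w, hw, hn⟩)))

lemma dg_escape_exists [Fintype V] (hout : ∀ v : V, ∃ w, E v w) {v : V}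
    (hv : v ∉ dgAttr E S T) (hS : v ∉ S) :
    ∃ w, E v w ∧ w ∉ dgAttr E S T := by
  by_contra h
  push_neg at h
  have hch : ∀ w : V, ∃ n, E v w → w ∈ dgIter E S T n := by
    intro w
    by_cases hw : E v w
    · obtain ⟨n, hn⟩ := Set.mem_iUnion.mp (h w hw)
      exact ⟨n, fun _ => hn⟩
    · exact ⟨0, fun hw' => absurd hw' hw⟩
  choose nf hnf using hch
  classical
  set N := Finset.univ.sup nf with hN
  have : v ∈ dgIter E S T (N + 1) := by
    refine Or.inr (Or.inr ⟨hS, fun w hw => ?_⟩)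
    exact dgIter_mono E S T (Finset.le_sup (Finset.mem_univ w)) (hnf w hw)
  exact hv (dgIter_subset_attr E S T (N + 1) this)

/-- Rank of a vertex in the attractor. -/
noncomputable def dgRank (v : V) : ℕ := sInf {n | v ∈ dgIter E S T n}

lemma dg_mem_rank {v : V} (hv : v ∈ dgAttr E S T) :
    v ∈ dgIter E S T (dgRank (E := E) (S := S) (T := T) v) := by
  obtain ⟨n, hn⟩ := Set.mem_iUnion.mp hv
  exact Nat.sInf_mem (⟨n, hn⟩ : {n | v ∈ dgIter E S T n}.Nonempty)

lemma dg_attr_step {v : V} (hv : v ∈ dgAttr E S T) (hT : v ∉ T) :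
    (v ∈ S → ∃ w, E v w ∧ w ∈ dgAttr E S T ∧
        dgRank (E := E) (S := S) (T := T) w < dgRank (E := E) (S := S) (T := T) v) ∧
    (v ∉ S → ∀ w, E v w → w ∈ dgAttr E S T ∧
        dgRank (E := E) (S := S) (T := T) w < dgRank (E := E) (S := S) (T := T) v) := by
  set d := dgRank (E := E) (S := S) (T := T) v with hd
  have hmem : v ∈ dgIter E S T d := dg_mem_rank hv
  have hd0 : d ≠ 0 := by
    intro h0
    rw [h0] at hmem
    exact hT hmem
  obtain ⟨m, hm⟩ := Nat.exists_eq_succ_of_ne_zero hd0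
  have hnot : v ∉ dgIter E S T m := by
    intro hmm
    have h2 : dgRank (E := E) (S := S) (T := T) v ≤ m :=
      Nat.sInf_le (show m ∈ {n | v ∈ dgIter E S T n} from hmm)
    omega
  rw [hm] at hmem
  rcases hmem with hA | hstep
  · exact absurd hA hnot
  rcases hstep with ⟨hS, w, hw, hwm⟩ | ⟨hS, hall⟩
  · constructor
    · intro _
      refine ⟨w, hw, dgIter_subset_attr E S T m hwm, ?_⟩
      have h2 : dgRank (E := E) (S := S) (T := T) w ≤ m :=
        Nat.sInf_le (show m ∈ {n | w ∈ dgIter E S T n} from hwm)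
      omega
    · intro h; exact absurd hS h
  · constructor
    · intro h; exact absurd h hS
    · intro _ w hw
      have hwm := hall w hw
      refine ⟨dgIter_subset_attr E S T m hwm, ?_⟩
      have h2 : dgRank (E := E) (S := S) (T := T) w ≤ m :=
        Nat.sInf_le (show m ∈ {n | w ∈ dgIter E S T n} from hwm)
      omega

/-- The attracting player has a positional strategy reaching `T` from the attractor. -/
lemma dg_attr_strategy (hout : ∀ v : V, ∃ w, E v w) :
    ∃ σ : V → V, (∀ v, E v (σ v)) ∧
      ∀ f : ℕ → V, (∀ n, E (f n) (f (n + 1)) ∧ (f n ∈ S → f (n + 1) = σ (f n))) →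
        f 0 ∈ dgAttr E S T → ∃ n, f n ∈ T := by
  classical
  refine ⟨fun v =>
    if h : v ∈ S ∧ v ∈ dgAttr E S T ∧ v ∉ T then
      Classical.choose ((dg_attr_step h.2.1 h.2.2).1 h.1)
    else Classical.choose (hout v), fun v => ?_, ?_⟩
  · by_cases h : v ∈ S ∧ v ∈ dgAttr E S T ∧ v ∉ T
    · simp only [dif_pos h]
      exact (Classical.choose_spec ((dg_attr_step h.2.1 h.2.2).1 h.1)).1
    · simp only [dif_neg h]
      exact Classical.choose_spec (hout v)
  · have key : ∀ k : ℕ, ∀ f : ℕ → V,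
        (∀ n, E (f n) (f (n + 1)) ∧ (f n ∈ S → f (n + 1) =
          (fun v => if h : v ∈ S ∧ v ∈ dgAttr E S T ∧ v ∉ T then
            Classical.choose ((dg_attr_step h.2.1 h.2.2).1 h.1)
          else Classical.choose (hout v)) (f n))) →
        f 0 ∈ dgAttr E S T → dgRank (E := E) (S := S) (T := T) (f 0) ≤ k →
        ∃ n, f n ∈ T := by
      intro k
      induction k with
      | zero =>
        intro f _ hA hr
        have h0 : dgRank (E := E) (S := S) (T := T) (f 0) = 0 := Nat.le_zero.mp hr
        have := dg_mem_rank hA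
        rw [h0] at this
        exact ⟨0, this⟩
      | succ k ih =>
        intro f hf hA hr
        by_cases hT : f 0 ∈ T
        · exact ⟨0, hT⟩
        have hnext : f 1 ∈ dgAttr E S T ∧
            dgRank (E := E) (S := S) (T := T) (f 1) <
            dgRank (E := E) (S := S) (T := T) (f 0) := by
          by_cases hS : f 0 ∈ S
          · have heq := (hf 0).2 hS
            have hcond : f 0 ∈ S ∧ f 0 ∈ dgAttr E S T ∧ f 0 ∉ T := ⟨hS, hA, hT⟩
            simp only [dif_pos hcond] at heq
            have hspec := Classical.choose_spec ((dg_attr_step hcond.2.1 hcond.2.2).1 hcond.1)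
            rw [heq]
            exact ⟨hspec.2.1, hspec.2.2⟩
          · exact (dg_attr_step hA hT).2 hS (f 1) (hf 0).1
        have hrank : dgRank (E := E) (S := S) (T := T) ((fun n => f (n + 1)) 0) ≤ k := by
          show dgRank (E := E) (S := S) (T := T) (f 1) ≤ k
          omega
        have := ih (fun n => f (n + 1)) (fun n => hf (n + 1)) hnext.1 hrank
        obtain ⟨n, hn⟩ := this
        exact ⟨n + 1, hn⟩
    intro f hf hA
    exact key (dgRank (E := E) (S := S) (T := T) (f 0)) f hf hA le_rfl

/-- The escaping player can stay out of the attractor forever. -/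
lemma dg_escape_strategy [Fintype V] (hout : ∀ v : V, ∃ w, E v w) (P : Set V)
    (hPS : Disjoint P S)
    (hrest : ∀ v, v ∉ P → v ∉ S → v ∉ dgAttr E S T → ∀ w, E v w → w ∉ dgAttr E S T) :
    ∃ σ : V → V, (∀ v, E v (σ v)) ∧
      ∀ f : ℕ → V, (∀ n, E (f n) (f (n + 1)) ∧ (f n ∈ P → f (n + 1) = σ (f n))) →
        f 0 ∉ dgAttr E S T → ∀ n, f n ∉ dgAttr E S T := by
  classical
  refine ⟨fun v =>
    if h : ∃ w, E v w ∧ w ∉ dgAttr E S T then Classical.choose h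
    else Classical.choose (hout v), fun v => ?_, ?_⟩
  · by_cases h : ∃ w, E v w ∧ w ∉ dgAttr E S T
    · simp only [dif_pos h]; exact (Classical.choose_spec h).1
    · simp only [dif_neg h]; exact Classical.choose_spec (hout v)
  · intro f hf h0 n
    induction n with
    | zero => exact h0
    | succ n ih =>
      by_cases hP : f n ∈ P
      · have heq := (hf n).2 hP
        have hS : f n ∉ S := fun hS => (hPS.ne_of_mem hP hS) rfl
        have hex : ∃ w, E (f n) w ∧ w ∉ dgAttr E S T := dg_escape_exists hout ih hS
        simp only [dif_pos hex] at heq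
        rw [heq]
        exact (Classical.choose_spec hex).2
      · by_cases hS : f n ∈ S
        · exact dg_escape_mem ih hS (f (n + 1)) (hf n).1
        · exact hrest (f n) hP hS ih (f (n + 1)) (hf n).1

end DGAttractor

/-- Every two-person win/lose DG game has a saddle point in pure positional strategies:
`V = V₁ ∪ V₂ ∪ VT` is a partition, terminals `VT` carry self-loops and no other outgoing
edges, every vertex has an outgoing edge, outcomes are the terminals plus one outcome `c`
for infinite plays, `T₁ ⊆ VT` and the proposition `cWin1` describe player 1's winning
outcomes. For every initial position, exactly one of the players has a positional
strategy winning against all strategies of the opponent. -/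
theorem dg_winlose_determinacy {V : Type*} [Fintype V] (E : V → V → Prop)
    (V₁ V₂ VT : Set V)
    (hcov : V₁ ∪ V₂ ∪ VT = Set.univ)
    (h12 : Disjoint V₁ V₂) (h1T : Disjoint V₁ VT) (h2T : Disjoint V₂ VT)
    (hterm : ∀ v ∈ VT, E v v ∧ ∀ w, E v w → w = v)
    (hout : ∀ v : V, ∃ w, E v w)
    (T₁ : Set V) (hT₁ : T₁ ⊆ VT) (cWin1 : Prop) :
    ∀ v₀ : V, Xor'
      (∃ σ₁ : V → V, (∀ v ∈ V₁, E v (σ₁ v)) ∧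
        ∀ f : ℕ → V, f 0 = v₀ →
          (∀ n, E (f n) (f (n + 1)) ∧ (f n ∈ V₁ → f (n + 1) = σ₁ (f n))) →
          ((∃ n, f n ∈ T₁) ∨ ((∀ n, f n ∉ VT) ∧ cWin1)))
      (∃ σ₂ : V → V, (∀ v ∈ V₂, E v (σ₂ v)) ∧
        ∀ f : ℕ → V, f 0 = v₀ →
          (∀ n, E (f n) (f (n + 1)) ∧ (f n ∈ V₂ → f (n + 1) = σ₂ (f n))) →
          ¬ ((∃ n, f n ∈ T₁) ∨ ((∀ n, f n ∉ VT) ∧ cWin1))) := by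
  classical
  intro v₀
  have hVT : ∀ v : V, v ∉ V₁ → v ∉ V₂ → v ∈ VT := by
    intro v h1 h2
    have : v ∈ V₁ ∪ V₂ ∪ VT := by rw [hcov]; trivial
    rcases this with (h | h) | h
    · exact absurd h h1
    · exact absurd h h2
    · exact h
  -- terminal absorption
  have habs : ∀ f : ℕ → V, (∀ n, E (f n) (f (n + 1))) →
      ∀ m, f m ∈ VT → ∀ j, m ≤ j → f j = f m := by
    intro f hE m hm j hj
    induction j, hj using Nat.le_induction with
    | base => rfl
    | succ j hj ih =>
      have : f j ∈ VT := by rw [ih]; exact hm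
      rw [(hterm (f j) this).2 (f (j + 1)) (hE j), ih]
  -- not both players can win
  have hnot : ∀ σ₁ σ₂ : V → V, (∀ v ∈ V₁, E v (σ₁ v)) → (∀ v ∈ V₂, E v (σ₂ v)) →
      (∀ f : ℕ → V, f 0 = v₀ →
        (∀ n, E (f n) (f (n + 1)) ∧ (f n ∈ V₁ → f (n + 1) = σ₁ (f n))) →
        ((∃ n, f n ∈ T₁) ∨ ((∀ n, f n ∉ VT) ∧ cWin1))) →
      (∀ f : ℕ → V, f 0 = v₀ →
        (∀ n, E (f n) (f (n + 1)) ∧ (f n ∈ V₂ → f (n + 1) = σ₂ (f n))) →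
        ¬ ((∃ n, f n ∈ T₁) ∨ ((∀ n, f n ∉ VT) ∧ cWin1))) → False := by
    intro σ₁ σ₂ h1 h2 hw1 hw2
    set f : ℕ → V := fun n =>
      Nat.rec v₀ (fun _ v => if v ∈ V₁ then σ₁ v else if v ∈ V₂ then σ₂ v else v) n with hfdef
    have hstep : ∀ n, f (n + 1) =
        if f n ∈ V₁ then σ₁ (f n) else if f n ∈ V₂ then σ₂ (f n) else f n := fun n => rfl
    have hE : ∀ n, E (f n) (f (n + 1)) := by
      intro n
      rw [hstep n]
      by_cases hA : f n ∈ V₁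
      · rw [if_pos hA]; exact h1 _ hA
      · rw [if_neg hA]
        by_cases hB : f n ∈ V₂
        · rw [if_pos hB]; exact h2 _ hB
        · rw [if_neg hB]; exact (hterm _ (hVT _ hA hB)).1
    have hc1 : ∀ n, f n ∈ V₁ → f (n + 1) = σ₁ (f n) := fun n h => by
      rw [hstep n, if_pos h]
    have hc2 : ∀ n, f n ∈ V₂ → f (n + 1) = σ₂ (f n) := fun n h => by
      rw [hstep n, if_neg (fun h1' => Set.disjoint_left.mp h12 h1' h), if_pos h]
    exact hw2 f rfl (fun n => ⟨hE n, hc2 n⟩) (hw1 f rfl (fun n => ⟨hE n, hc1 n⟩))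
  by_cases hc : cWin1
  · -- infinite plays are won by player 1; player 2 must attract to VT \ T₁
    by_cases hv : v₀ ∈ dgAttr E V₂ (VT \ T₁)
    · obtain ⟨σ, hσE, hσW⟩ := dg_attr_strategy (E := E) (S := V₂) (T := VT \ T₁) hout
      have hB : ∃ σ₂ : V → V, (∀ v ∈ V₂, E v (σ₂ v)) ∧
          ∀ f : ℕ → V, f 0 = v₀ →
            (∀ n, E (f n) (f (n + 1)) ∧ (f n ∈ V₂ → f (n + 1) = σ₂ (f n))) →
            ¬ ((∃ n, f n ∈ T₁) ∨ ((∀ n, f n ∉ VT) ∧ cWin1)) := by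
        refine ⟨σ, fun v _ => hσE v, fun f h0 hcons => ?_⟩
        obtain ⟨n, hn⟩ := hσW f hcons (by rw [h0]; exact hv)
        have hE' : ∀ k, E (f k) (f (k + 1)) := fun k => (hcons k).1
        rintro (⟨m, hm⟩ | ⟨hall, -⟩)
        · rcases le_total m n with h | h
          · have : f n ∈ T₁ := by rw [habs f hE' m (hT₁ hm) n h]; exact hm
            exact hn.2 this
          · have : f m = f n := habs f hE' n hn.1 m h
            exact hn.2 (by rwa [this] at hm)
        · exact hall n hn.1
      exact Or.inr ⟨hB, fun hA => by
        obtain ⟨σ₁, a, b⟩ := hA; obtain ⟨σ₂, c, d⟩ := hB; exact hnot σ₁ σ₂ a c b d⟩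
    · obtain ⟨σ, hσE, hσW⟩ := dg_escape_strategy (E := E) (S := V₂) (T := VT \ T₁)
        hout V₁ h12 (by
          intro v hv1 hv2 hvA w hw
          rw [(hterm v (hVT v hv1 hv2)).2 w hw]
          exact hvA)
      have hA : ∃ σ₁ : V → V, (∀ v ∈ V₁, E v (σ₁ v)) ∧
          ∀ f : ℕ → V, f 0 = v₀ →
            (∀ n, E (f n) (f (n + 1)) ∧ (f n ∈ V₁ → f (n + 1) = σ₁ (f n))) →
            ((∃ n, f n ∈ T₁) ∨ ((∀ n, f n ∉ VT) ∧ cWin1)) := by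
        refine ⟨σ, fun v _ => hσE v, fun f h0 hcons => ?_⟩
        have hesc : ∀ n, f n ∉ dgAttr E V₂ (VT \ T₁) :=
          hσW f hcons (by rw [h0]; exact hv)
        by_cases hT : ∃ n, f n ∈ VT
        · obtain ⟨n, hn⟩ := hT
          left
          refine ⟨n, ?_⟩
          by_contra h
          exact hesc n (dgT_subset_attr E V₂ (VT \ T₁) ⟨hn, h⟩)
        · push_neg at hT
          exact Or.inr ⟨hT, hc⟩
      exact Or.inl ⟨hA, fun hB => by
        obtain ⟨σ₁, a, b⟩ := hA; obtain ⟨σ₂, c, d⟩ := hB; exact hnot σ₁ σ₂ a c b d⟩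
  · -- infinite plays are won by player 2; player 1 must attract to T₁
    by_cases hv : v₀ ∈ dgAttr E V₁ T₁
    · obtain ⟨σ, hσE, hσW⟩ := dg_attr_strategy (E := E) (S := V₁) (T := T₁) hout
      have hA : ∃ σ₁ : V → V, (∀ v ∈ V₁, E v (σ₁ v)) ∧
          ∀ f : ℕ → V, f 0 = v₀ →
            (∀ n, E (f n) (f (n + 1)) ∧ (f n ∈ V₁ → f (n + 1) = σ₁ (f n))) →
            ((∃ n, f n ∈ T₁) ∨ ((∀ n, f n ∉ VT) ∧ cWin1)) := by
        refine ⟨σ, fun v _ => hσE v, fun f h0 hcons => ?_⟩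
        exact Or.inl (hσW f hcons (by rw [h0]; exact hv))
      exact Or.inl ⟨hA, fun hB => by
        obtain ⟨σ₁, a, b⟩ := hA; obtain ⟨σ₂, c, d⟩ := hB; exact hnot σ₁ σ₂ a c b d⟩
    · obtain ⟨σ, hσE, hσW⟩ := dg_escape_strategy (E := E) (S := V₁) (T := T₁)
        hout V₂ h12.symm (by
          intro v hv2 hv1 hvA w hw
          rw [(hterm v (hVT v hv1 hv2)).2 w hw]
          exact hvA)
      have hB : ∃ σ₂ : V → V, (∀ v ∈ V₂, E v (σ₂ v)) ∧
          ∀ f : ℕ → V, f 0 = v₀ →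
            (∀ n, E (f n) (f (n + 1)) ∧ (f n ∈ V₂ → f (n + 1) = σ₂ (f n))) →
            ¬ ((∃ n, f n ∈ T₁) ∨ ((∀ n, f n ∉ VT) ∧ cWin1)) := by
        refine ⟨σ, fun v _ => hσE v, fun f h0 hcons => ?_⟩
        have hesc : ∀ n, f n ∉ dgAttr E V₁ T₁ := hσW f hcons (by rw [h0]; exact hv)
        rintro (⟨n, hn⟩ | ⟨-, hcw⟩)
        · exact hesc n (dgT_subset_attr E V₁ T₁ hn)
        · exact hc hcw
      exact Or.inr ⟨hB, fun hA => by
        obtain ⟨σ₁, a, b⟩ := hA; obtain ⟨σ₂, c, d⟩ := hB; exact hnot σ₁ σ₂ a c b d⟩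
end
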